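/- Let t > 0 be real, d a positive integer, and K ≥ 0. Let ξ : ℝ → ℝ be Lebesgue measurable and suppose that ∫_{(−∞,T]} F_t(|ξ(λ)|) dλ ≤ K·e^T for every real T. Let f : ℝ → [0,∞) be measurable, bounded, Lebesgue integrable, and vanishing outside (−∞, b] for some real b. Then the product f·ξ is Lebesgue integrable and ∫_ℝ f(λ)·ξ(λ) dλ ≤ K·e^b + t^{−d} · (log(1 + ‖f‖_∞))^d · ‖f‖_1, where ‖f‖_∞ is the essential supremum of f and ‖f‖_1 = ∫ f. -/

import Mathlib

open MeasureTheory Real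

/-- `F t d x = ∫₀ˣ (exp (t y^(1/d)) − 1) dy`. -/
noncomputable def F (t : ℝ) (d : ℕ) (x : ℝ) : ℝ :=
  ∫ y in (0:ℝ)..x, (Real.exp (t * y ^ ((1:ℝ) / d)) - 1)

lemma contg (t : ℝ) (d : ℕ) (hd : 0 < d) :
    Continuous fun y : ℝ => Real.exp (t * y ^ ((1:ℝ)/d)) - 1 := by
  have h : Continuous fun y : ℝ => y ^ ((1:ℝ)/d) := by
    rw [continuous_iff_continuousAt]
    intro x
    exact Real.continuousAt_rpow_const x _ (Or.inr (by positivity))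
  exact (Real.continuous_exp.comp (continuous_const.mul h)).sub continuous_const

lemma F_nonneg {t : ℝ} (ht : 0 ≤ t) (d : ℕ) {x : ℝ} (hx : 0 ≤ x) : 0 ≤ F t d x := by
  apply intervalIntegral.integral_nonneg hx
  intro y hy
  have h1 : 0 ≤ t * y ^ ((1:ℝ)/d) := mul_nonneg ht (Real.rpow_nonneg hy.1 _)
  have := Real.one_le_exp h1
  linarith

lemma contF (t : ℝ) (d : ℕ) (hd : 0 < d) : Continuous (F t d) :=
  intervalIntegral.continuous_primitive
    (fun a b => (contg t d hd).intervalIntegrable a b) 0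

lemma young {t : ℝ} (ht : 0 < t) {d : ℕ} (hd : 0 < d) {s x : ℝ} (hs : 0 ≤ s) (hx : 0 ≤ x) :
    s * x ≤ F t d x + s * (Real.log (1 + s) / t) ^ d := by
  set c := Real.log (1 + s) / t with hc
  have hc0 : 0 ≤ c := div_nonneg (Real.log_nonneg (by linarith)) ht.le
  set a := c ^ d with ha
  have ha0 : 0 ≤ a := pow_nonneg hc0 d
  have hd' : (d:ℝ) ≠ 0 := by positivity
  have hroot : a ^ ((1:ℝ)/d) = c := by
    rw [ha, ← Real.rpow_natCast c d, ← Real.rpow_mul hc0]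
    rw [mul_one_div, div_self hd', Real.rpow_one]
  have hval : Real.exp (t * a ^ ((1:ℝ)/d)) - 1 = s := by
    rw [hroot, hc, mul_div_cancel₀ _ ht.ne', Real.exp_log (by linarith)]
    ring
  rcases le_or_gt x a with hxa | hax
  · have hF : 0 ≤ F t d x := F_nonneg ht.le d hx
    nlinarith [mul_le_mul_of_nonneg_left hxa hs]
  · have hint : ∀ p q : ℝ,
        IntervalIntegrable (fun y => Real.exp (t * y ^ ((1:ℝ)/d)) - 1) volume p q :=
      fun p q => (contg t d hd).intervalIntegrable p q
    have hsub : F t d x - F t d a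
        = ∫ y in a..x, (Real.exp (t * y ^ ((1:ℝ)/d)) - 1) :=
      intervalIntegral.integral_interval_sub_left (hint 0 x) (hint 0 a)
    have hlow : (x - a) * s ≤ ∫ y in a..x, (Real.exp (t * y ^ ((1:ℝ)/d)) - 1) := by
      have hmono := intervalIntegral.integral_mono_on (f := fun _ : ℝ => s)
        hax.le (intervalIntegrable_const) (hint a x) (fun y hy => ?_)
      · rw [intervalIntegral.integral_const, smul_eq_mul] at hmono
        linarith
      · have hy1 : c ≤ y ^ ((1:ℝ)/d) := by
          rw [← hroot]
          exact Real.rpow_le_rpow ha0 hy.1 (by positivity)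
        have := Real.exp_le_exp.2 (mul_le_mul_of_nonneg_left hy1 ht.le)
        rw [← hval]
        rw [hroot]
        linarith
    have hFa : 0 ≤ F t d a := F_nonneg ht.le d ha0
    nlinarith

theorem ssf_duality_bound (t : ℝ) (ht : 0 < t) (d : ℕ) (hd : 0 < d)
    (K : ℝ) (hK : 0 ≤ K) (ξ : ℝ → ℝ) (hξ : Measurable ξ)
    (hξint : ∀ T : ℝ,
      ∫⁻ lam in Set.Iic T, ENNReal.ofReal (F t d |ξ lam|)
        ≤ ENNReal.ofReal (K * Real.exp T))
    (f : ℝ → ℝ) (hfmeas : Measurable f) (hfnonneg : ∀ lam, 0 ≤ f lam)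
    (hfbdd : ∃ M : ℝ, ∀ lam, f lam ≤ M) (hfint : Integrable f)
    (b : ℝ) (hfsupp : ∀ lam, b < lam → f lam = 0) :
    Integrable (fun lam => f lam * ξ lam) ∧
    ∫ lam, f lam * ξ lam
      ≤ K * Real.exp b
        + (Real.log (1 + (eLpNorm f ⊤ volume).toReal)) ^ d / t ^ d
          * ∫ lam, f lam := by
  obtain ⟨M, hM⟩ := hfbdd
  have hM0 : 0 ≤ M := le_trans (hfnonneg 0) (hM 0)
  set N := (eLpNorm f ⊤ volume).toReal with hNdef
  have hN0 : 0 ≤ N := ENNReal.toReal_nonneg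
  -- a.e. bound f ≤ N
  have hesslt : eLpNorm f ⊤ volume < ⊤ := by
    have h0 : eLpNorm f ⊤ volume ≤ ENNReal.ofReal M := by
      rw [eLpNorm_exponent_top]
      apply eLpNormEssSup_le_of_ae_bound (C := M)
      filter_upwards with lam
      rw [Real.norm_eq_abs, abs_of_nonneg (hfnonneg lam)]
      exact hM lam
    exact lt_of_le_of_lt h0 ENNReal.ofReal_lt_top
  have hfN : ∀ᵐ lam, f lam ≤ N := by
    have h1 := ae_le_eLpNormEssSup (f := f) (μ := volume)
    filter_upwards [h1] with lam hlam
    have h2 : (‖f lam‖₊ : ENNReal) ≤ eLpNorm f ⊤ volume := by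
      rwa [eLpNorm_exponent_top]
    have h3 := ENNReal.toReal_mono hesslt.ne h2
    rw [ENNReal.coe_toReal, coe_nnnorm, Real.norm_eq_abs,
      abs_of_nonneg (hfnonneg lam)] at h3
    exact h3
  -- dominating function pieces
  set g : ℝ → ℝ := fun lam => F t d |ξ lam| with hg
  have hg_meas : Measurable g := (contF t d hd).measurable.comp hξ.abs
  have hg_nonneg : ∀ lam, 0 ≤ g lam := fun lam => F_nonneg ht.le d (abs_nonneg _)
  set h : ℝ → ℝ := (Set.Iic b).indicator g with hh
  have hh_meas : Measurable h := hg_meas.indicator measurableSet_Iic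
  have hh_nonneg : ∀ lam, 0 ≤ h lam := fun lam =>
    Set.indicator_nonneg (fun x _ => hg_nonneg x) lam
  have hh_lint : ∫⁻ lam, ENNReal.ofReal (h lam) ≤ ENNReal.ofReal (K * Real.exp b) := by
    have heq : ∀ lam, ENNReal.ofReal (h lam)
        = (Set.Iic b).indicator (fun x => ENNReal.ofReal (g x)) lam := by
      intro lam
      rw [hh]
      by_cases hmem : lam ∈ Set.Iic b
      · simp [hmem]
      · simp [hmem]
    calc ∫⁻ lam, ENNReal.ofReal (h lam)
        = ∫⁻ lam, (Set.Iic b).indicator (fun x => ENNReal.ofReal (g x)) lam := by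
          simp_rw [heq]
      _ = ∫⁻ lam in Set.Iic b, ENNReal.ofReal (g lam) :=
          lintegral_indicator measurableSet_Iic _
      _ ≤ ENNReal.ofReal (K * Real.exp b) := hξint b
  have hh_int : Integrable h := by
    refine ⟨hh_meas.aestronglyMeasurable, ?_⟩
    rw [hasFiniteIntegral_iff_norm]
    calc ∫⁻ lam, ENNReal.ofReal ‖h lam‖
        = ∫⁻ lam, ENNReal.ofReal (h lam) := by
          simp_rw [Real.norm_eq_abs]
          congr 1
          ext lam
          rw [abs_of_nonneg (hh_nonneg lam)]
      _ ≤ ENNReal.ofReal (K * Real.exp b) := hh_lint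
      _ < ⊤ := ENNReal.ofReal_lt_top
  -- the Orlicz-conjugate term
  set φ : ℝ → ℝ := fun lam => f lam * (Real.log (1 + f lam) / t) ^ d with hφ
  have hφ_nonneg : ∀ lam, 0 ≤ φ lam := fun lam =>
    mul_nonneg (hfnonneg lam)
      (pow_nonneg (div_nonneg (Real.log_nonneg (by linarith [hfnonneg lam])) ht.le) d)
  have hφ_meas : Measurable φ := by
    apply hfmeas.mul
    apply Measurable.pow_const
    exact ((measurable_const.add hfmeas).log.div_const t)
  have hφ_le_aux : ∀ {A : ℝ}, 0 ≤ A → ∀ lam, f lam ≤ A →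
      φ lam ≤ (Real.log (1 + A) / t) ^ d * f lam := by
    intro A hA lam hle
    have hlog : Real.log (1 + f lam) ≤ Real.log (1 + A) :=
      Real.log_le_log (by linarith [hfnonneg lam]) (by linarith)
    have hp : (Real.log (1 + f lam) / t) ^ d ≤ (Real.log (1 + A) / t) ^ d := by
      gcongr
      exact div_nonneg (Real.log_nonneg (by linarith [hfnonneg lam])) ht.le
    calc φ lam = f lam * (Real.log (1 + f lam) / t) ^ d := rfl
      _ ≤ f lam * (Real.log (1 + A) / t) ^ d :=
          mul_le_mul_of_nonneg_left hp (hfnonneg lam)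
      _ = (Real.log (1 + A) / t) ^ d * f lam := mul_comm _ _
  have hφ_int : Integrable φ := by
    apply Integrable.mono (hfint.const_mul ((Real.log (1 + M) / t) ^ d))
      hφ_meas.aestronglyMeasurable
    filter_upwards with lam
    rw [Real.norm_eq_abs, Real.norm_eq_abs, abs_of_nonneg (hφ_nonneg lam)]
    exact le_trans (hφ_le_aux hM0 lam (hM lam)) (le_abs_self _)
  -- Young pointwise
  have hyoung : ∀ lam, f lam * |ξ lam| ≤ g lam + φ lam := fun lam =>
    young ht hd (hfnonneg lam) (abs_nonneg _)
  have hbound : ∀ lam, f lam * ξ lam ≤ h lam + φ lam := by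
    intro lam
    rcases le_or_gt lam b with hlb | hbl
    · have h1 : f lam * ξ lam ≤ f lam * |ξ lam| :=
        mul_le_mul_of_nonneg_left (le_abs_self _) (hfnonneg lam)
      have h2 : h lam = g lam := Set.indicator_of_mem (Set.mem_Iic.mpr hlb) g
      rw [h2]
      linarith [hyoung lam]
    · rw [hfsupp lam hbl]
      simp only [zero_mul]
      exact add_nonneg (hh_nonneg lam) (hφ_nonneg lam)
  -- integrability of f·ξ
  have hprod_int : Integrable (fun lam => f lam * ξ lam) := by
    apply Integrable.mono (hh_int.add hφ_int) (hfmeas.mul hξ).aestronglyMeasurable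
    filter_upwards with lam
    rw [Real.norm_eq_abs, Real.norm_eq_abs, Pi.mul_apply, Pi.add_apply, abs_mul, abs_of_nonneg (hfnonneg lam)]
    have h1 : f lam * |ξ lam| ≤ h lam + φ lam := by
      rcases le_or_gt lam b with hlb | hbl
      · have h2 : h lam = g lam := Set.indicator_of_mem (Set.mem_Iic.mpr hlb) g
        rw [h2]; exact hyoung lam
      · rw [hfsupp lam hbl, zero_mul]
        exact add_nonneg (hh_nonneg lam) (hφ_nonneg lam)
    exact le_trans h1 (le_abs_self _)
  refine ⟨hprod_int, ?_⟩
  -- ∫ h ≤ K e^b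
  have hInth : ∫ lam, h lam ≤ K * Real.exp b := by
    rw [integral_eq_lintegral_of_nonneg_ae (ae_of_all _ hh_nonneg)
      hh_meas.aestronglyMeasurable]
    exact ENNReal.toReal_le_of_le_ofReal (by positivity) hh_lint
  -- ∫ φ ≤ (log(1+N))^d / t^d * ∫ f
  have hIntφ : ∫ lam, φ lam ≤ (Real.log (1 + N)) ^ d / t ^ d * ∫ lam, f lam := by
    have hconst : (Real.log (1 + N)) ^ d / t ^ d = (Real.log (1 + N) / t) ^ d :=
      (div_pow _ _ _).symm
    rw [hconst]
    have hsm : (Real.log (1 + N) / t) ^ d * ∫ lam, f lam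
        = ∫ lam, (Real.log (1 + N) / t) ^ d * f lam := by
      rw [← smul_eq_mul, ← integral_smul]
      simp [smul_eq_mul]
    rw [hsm]
    apply integral_mono_ae hφ_int (hfint.const_mul _)
    filter_upwards [hfN] with lam hlam
    exact hφ_le_aux hN0 lam hlam
  calc ∫ lam, f lam * ξ lam
      ≤ ∫ lam, (h lam + φ lam) :=
        integral_mono hprod_int (hh_int.add hφ_int) hbound
    _ = (∫ lam, h lam) + ∫ lam, φ lam := integral_add hh_int hφ_int
    _ ≤ K * Real.exp b + (Real.log (1 + N)) ^ d / t ^ d * ∫ lam, f lam := by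
        linarith
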